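/- For positive real numbers y_1, ..., y_m and any index i with 1 ≤ i ≤ m, the inequality (y_1 + ... + y_m + 1/(y_1 ⋯ y_m))^m · y_i > m^m holds. -/
import Mathlib


theorem stmt2 (m : ℕ) (hm : 1 ≤ m) (y : Fin m → ℝ) (hy : ∀ i, 0 < y i) (i : Fin m) :
    ((m : ℝ)) ^ m < ((∑ j, y j) + 1 / ∏ j, y j) ^ m * y i := by
  set P : ℝ := ∏ j, y j with hPdef
  have hP : 0 < P := Finset.prod_pos fun j _ => hy j
  have hm0 : (0:ℝ) < m := by exact_mod_cast hm
  set z : Fin m → ℝ := Function.update y i (y i + 1 / P) with hz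
  have hzpos : ∀ j, 0 < z j := by
    intro j
    rcases eq_or_ne j i with rfl | h
    · simp only [hz, Function.update_self]
      have h1 := one_div_pos.mpr hP
      have h2 := hy j
      linarith
    · simp [hz, Function.update_of_ne h]; exact hy j
  have hsum : ∑ j, z j = (∑ j, y j) + 1 / P := by
    rw [hz, Finset.sum_update_of_mem (Finset.mem_univ i), Finset.sdiff_singleton_eq_erase]
    rw [← Finset.add_sum_erase _ y (Finset.mem_univ i)]
    ring
  have hQ : ∏ x ∈ Finset.univ.erase i, y x = P / y i := by
    have h := Finset.mul_prod_erase Finset.univ y (Finset.mem_univ i)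
    rw [← hPdef] at h
    rw [eq_div_iff (hy i).ne', mul_comm]
    exact h
  have hprod : ∏ j, z j = (y i + 1 / P) * (P / y i) := by
    rw [hz, Finset.prod_update_of_mem (Finset.mem_univ i), Finset.sdiff_singleton_eq_erase, hQ]
  have hprodgt : 1 / y i < ∏ j, z j := by
    rw [hprod]
    have h1 : (1 / P) * (P / y i) < (y i + 1 / P) * (P / y i) := by
      apply mul_lt_mul_of_pos_right
      · linarith [hy i]
      · exact div_pos hP (hy i)
    calc 1 / y i = (1 / P) * (P / y i) := by field_simp
    _ < _ := h1
  have amgm := Real.geom_mean_le_arith_mean_weighted Finset.univ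
      (fun _ : Fin m => (m:ℝ)⁻¹) z (fun j _ => by positivity)
      (by simp [Finset.sum_const]; field_simp)
      (fun j _ => (hzpos j).le)
  have hlhs : ∏ j, z j ^ ((m:ℝ)⁻¹) = (∏ j, z j) ^ ((m:ℝ)⁻¹) := by
    rw [← Real.finset_prod_rpow _ _ (fun j _ => (hzpos j).le)]
  have hrhs : ∑ j, (m:ℝ)⁻¹ * z j = (m:ℝ)⁻¹ * ((∑ j, y j) + 1 / P) := by
    rw [← Finset.mul_sum, hsum]
  rw [hlhs, hrhs] at amgm
  have hkey : ∏ j, z j ≤ ((m:ℝ)⁻¹ * ((∑ j, y j) + 1 / P)) ^ m := by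
    have h2 : ((∏ j, z j) ^ ((m:ℝ)⁻¹)) ^ m ≤ ((m:ℝ)⁻¹ * ((∑ j, y j) + 1 / P)) ^ m := by
      apply pow_le_pow_left₀ (Real.rpow_nonneg (Finset.prod_nonneg fun j _ => (hzpos j).le) _) amgm
    rwa [Real.rpow_inv_natCast_pow (Finset.prod_nonneg fun j _ => (hzpos j).le)
      (by omega)] at h2
  have hfinal : 1 / y i < ((m:ℝ)⁻¹ * ((∑ j, y j) + 1 / P)) ^ m := lt_of_lt_of_le hprodgt hkey
  have hexp : ((m:ℝ)⁻¹ * ((∑ j, y j) + 1 / P)) ^ m = ((∑ j, y j) + 1 / P) ^ m / (m:ℝ) ^ m := by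
    rw [mul_pow, inv_pow]
    ring
  rw [hexp, lt_div_iff₀ (by positivity), div_mul_eq_mul_div, div_lt_iff₀ (hy i)] at hfinal
  linarith
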